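/- arXiv:2101.11688 — 8 statements merged into one kernel-verified Lean document; each statement's English description precedes it below -/
import Mathlib

section
/- Let m be an n×k real matrix. If the Hadamard extension H(m) has full column rank, then there is a set R of at most k−1 of the rows of m such that the Hadamard extension H(m|_R) of the restriction of m to the rows in R has full column rank. -/
open Matrix

/-- The Hadamard extension of an `n × k` real matrix `m`: the `2^n × k` matrix whose
rows are indexed by subsets `S ⊆ {1,…,n}`, with entry `∏_{i ∈ S} m i j` in column `j`. -/
noncomputable def hext {n k : ℕ} (m : Matrix (Fin n) (Fin k) ℝ) :
    Matrix (Finset (Fin n)) (Fin k) ℝ :=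
  fun S j => ∏ i ∈ S, m i j

/-- The Hadamard extension of the restriction of `m` to the rows in `R`:
rows are indexed by subsets `S ⊆ R`. -/
noncomputable def hextRestrict {n k : ℕ} (m : Matrix (Fin n) (Fin k) ℝ) (R : Finset (Fin n)) :
    Matrix {S : Finset (Fin n) // S ⊆ R} (Fin k) ℝ :=
  fun S j => ∏ i ∈ S.1, m i j

namespace HextAux

variable {n k : ℕ}

/-- The row of the Hadamard extension indexed by `S`. -/
noncomputable def rowE (m : Matrix (Fin n) (Fin k) ℝ) (S : Finset (Fin n)) : Fin k → ℝ :=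
  fun j => ∏ i ∈ S, m i j

/-- Span of the rows of the Hadamard extension of the restriction to `R`. -/
noncomputable def W (m : Matrix (Fin n) (Fin k) ℝ) (R : Finset (Fin n)) :
    Submodule ℝ (Fin k → ℝ) :=
  Submodule.span ℝ (Set.range fun S : {S : Finset (Fin n) // S ⊆ R} => rowE m S.1)

/-- Dot product with `x`, as a linear functional. -/
noncomputable def dlin (x : Fin k → ℝ) : (Fin k → ℝ) →ₗ[ℝ] ℝ where
  toFun v := ∑ j, v j * x j
  map_add' u v := by simp [add_mul, Finset.sum_add_distrib]
  map_smul' c v := by simp [Finset.mul_sum, mul_assoc]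

lemma dlin_apply (x v : Fin k → ℝ) : dlin x v = ∑ j, v j * x j := rfl

/-- The "full column rank" property for the restriction to `R`, phrased dually. -/
def Q (m : Matrix (Fin n) (Fin k) ℝ) (R : Finset (Fin n)) : Prop :=
  ∀ x : Fin k → ℝ, (∀ S ⊆ R, dlin x (rowE m S) = 0) → x = 0

lemma gen_mem {m : Matrix (Fin n) (Fin k) ℝ} {R S : Finset (Fin n)} (hS : S ⊆ R) :
    rowE m S ∈ W m R :=
  Submodule.subset_span ⟨⟨S, hS⟩, rfl⟩

lemma W_mono {m : Matrix (Fin n) (Fin k) ℝ} {R R' : Finset (Fin n)} (h : R ⊆ R') :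
    W m R ≤ W m R' := by
  refine Submodule.span_le.2 ?_
  rintro _ ⟨⟨S, hS⟩, rfl⟩
  exact gen_mem (hS.trans h)

/-- Coordinatewise multiplication by row `i` of `m`, as a linear map. -/
noncomputable def mulRow (m : Matrix (Fin n) (Fin k) ℝ) (i : Fin n) :
    (Fin k → ℝ) →ₗ[ℝ] (Fin k → ℝ) where
  toFun v := fun j => m i j * v j
  map_add' u v := by funext j; simp [mul_add]
  map_smul' c v := by funext j; simp [smul_eq_mul]; ring

lemma mulRow_rowE (m : Matrix (Fin n) (Fin k) ℝ) {i : Fin n} {S : Finset (Fin n)}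
    (hi : i ∉ S) : mulRow m i (rowE m S) = rowE m (insert i S) := by
  funext j
  simp [mulRow, rowE, Finset.prod_insert hi]

lemma mulRow_W {m : Matrix (Fin n) (Fin k) ℝ} {R R' : Finset (Fin n)} {i : Fin n}
    (hi : i ∉ R) (hgen : ∀ S ⊆ R, rowE m (insert i S) ∈ W m R')
    {v : Fin k → ℝ} (hv : v ∈ W m R) : mulRow m i v ∈ W m R' := by
  have hle : W m R ≤ (W m R').comap (mulRow m i) := by
    refine Submodule.span_le.2 ?_
    rintro _ ⟨⟨S, hS⟩, rfl⟩
    have hiS : i ∉ S := fun hmem => hi (hS hmem)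
    simp only [Set.mem_setOf_eq, SetLike.mem_coe, Submodule.mem_comap, mulRow_rowE m hiS]
    exact hgen S hS
  exact hle hv

lemma closure {m : Matrix (Fin n) (Fin k) ℝ} {R : Finset (Fin n)}
    (hcl : ∀ i ∉ R, ∀ S ⊆ R, rowE m (insert i S) ∈ W m R) :
    ∀ T : Finset (Fin n), rowE m T ∈ W m R := by
  have key : ∀ c : ℕ, ∀ T : Finset (Fin n), T.card = c → rowE m T ∈ W m R := by
    intro c
    induction c using Nat.strong_induction_on with
    | _ c ih =>
      intro T hT
      by_cases hTR : T ⊆ R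
      · exact gen_mem hTR
      · obtain ⟨i, hiT, hiR⟩ := Finset.not_subset.mp hTR
        have hcard : (T.erase i).card < c := by
          rw [← hT]; exact Finset.card_erase_lt_of_mem hiT
        have h1 : rowE m (T.erase i) ∈ W m R := ih _ hcard _ rfl
        have h2 : mulRow m i (rowE m (T.erase i)) ∈ W m R :=
          mulRow_W hiR (hcl i hiR) h1
        have h3 : mulRow m i (rowE m (T.erase i)) = rowE m T := by
          rw [mulRow_rowE m (Finset.notMem_erase i T), Finset.insert_erase hiT]
        rwa [h3] at h2
  exact fun T => key T.card T rfl

lemma greedy (m : Matrix (Fin n) (Fin k) ℝ)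
    (hfull : ∀ x : Fin k → ℝ, (∀ T, dlin x (rowE m T) = 0) → x = 0) :
    ∀ d : ℕ, ∃ R : Finset (Fin n), R.card ≤ d ∧
      (Q m R ∨ d + 1 ≤ Module.finrank ℝ (W m R)) := by
  intro d
  induction d with
  | zero =>
    refine ⟨∅, by simp, ?_⟩
    rcases Nat.eq_zero_or_pos k with hk | hk
    · left
      intro x _
      exact funext fun j => absurd j.isLt (by omega)
    · right
      have h1 : rowE m (∅ : Finset (Fin n)) ≠ 0 := by
        intro h0
        have := congrFun h0 ⟨0, hk⟩
        simp [rowE] at this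
      have hle : Submodule.span ℝ {rowE m (∅ : Finset (Fin n))} ≤ W m ∅ :=
        Submodule.span_le.2 (Set.singleton_subset_iff.2 (gen_mem (Finset.Subset.refl _)))
      have := Submodule.finrank_mono hle
      rw [finrank_span_singleton h1] at this
      omega
  | succ d ih =>
    obtain ⟨R, hcard, hQ | hfin⟩ := ih
    · exact ⟨R, hcard.trans (Nat.le_succ d), Or.inl hQ⟩
    · by_cases hcl : ∀ i ∉ R, ∀ S ⊆ R, rowE m (insert i S) ∈ W m R
      · refine ⟨R, hcard.trans (Nat.le_succ d), Or.inl ?_⟩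
        intro x hx
        have hker : W m R ≤ LinearMap.ker (dlin x) := by
          refine Submodule.span_le.2 ?_
          rintro _ ⟨⟨S, hS⟩, rfl⟩
          simpa [LinearMap.mem_ker] using hx S hS
        exact hfull x fun T => hker (closure hcl T)
      · push_neg at hcl
        obtain ⟨i, hiR, S, hS, hnot⟩ := hcl
        refine ⟨insert i R, ?_, Or.inr ?_⟩
        · exact (Finset.card_insert_le i R).trans (Nat.succ_le_succ hcard)
        · have hlt : W m R < W m (insert i R) := by
            refine lt_of_le_of_ne (W_mono (Finset.subset_insert i R)) (fun he => hnot ?_)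
            rw [he]
            exact gen_mem (Finset.insert_subset_insert i hS)
          have := Submodule.finrank_lt_finrank_of_lt hlt
          omega
  
end HextAux

open HextAux in
/-- If `H(m)` has full column rank, then there is a set `R` of at most `k - 1` rows of `m`
such that `H(m|_R)` has full column rank. -/
theorem hext_fullColRank_implies_restrict {n k : ℕ} (m : Matrix (Fin n) (Fin k) ℝ)
    (h : LinearIndependent ℝ (hext m)ᵀ) :
    ∃ R : Finset (Fin n), R.card ≤ k - 1 ∧
      LinearIndependent ℝ (hextRestrict m R)ᵀ := by
  have hfull : ∀ x : Fin k → ℝ, (∀ T, dlin x (rowE m T) = 0) → x = 0 := by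
    intro x hx
    have hsum : ∑ j, x j • (hext m)ᵀ j = 0 := by
      funext T
      have := hx T
      simp only [dlin_apply, rowE] at this
      simpa [Finset.sum_apply, hext, Matrix.transpose_apply, mul_comm] using this
    exact funext (Fintype.linearIndependent_iff.mp h x hsum)
  obtain ⟨R, hcard, hQR⟩ := greedy m hfull (k - 1)
  have hQ : Q m R := by
    rcases hQR with hQ | hfin
    · exact hQ
    · -- `finrank` branch: the span is everything
      have hle : Module.finrank ℝ (W m R) ≤ k := by
        have := Submodule.finrank_le (W m R)
        simpa [Module.finrank_fintype_fun_eq_card] using this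
      have hk : 1 ≤ k := by omega
      have hkk : k - 1 + 1 = k := by omega
      rw [hkk] at hfin
      have htop : W m R = ⊤ := by
        apply Submodule.eq_top_of_finrank_eq
        rw [Module.finrank_fintype_fun_eq_card]
        simpa using le_antisymm hle hfin
      intro x hx
      have hker : W m R ≤ LinearMap.ker (dlin x) := by
        refine Submodule.span_le.2 ?_
        rintro _ ⟨⟨S, hS⟩, rfl⟩
        simpa [LinearMap.mem_ker] using hx S hS
      have hx0 : dlin x x = 0 := hker (htop ▸ Submodule.mem_top)
      rw [dlin_apply] at hx0
      funext j
      have := (Finset.sum_eq_zero_iff_of_nonneg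
        (fun j _ => mul_self_nonneg (x j))).mp hx0 j (Finset.mem_univ j)
      exact mul_self_eq_zero.mp this
  refine ⟨R, hcard, ?_⟩
  refine Fintype.linearIndependent_iff.mpr ?_
  intro g hg j
  have hgz : g = 0 := by
    apply hQ
    intro S hS
    have := congrFun hg ⟨S, hS⟩
    simp only [dlin_apply, rowE]
    simpa [Finset.sum_apply, hextRestrict, Matrix.transpose_apply, mul_comm] using this
  rw [hgz]; rfl
end

section
/- Let m be an n×k real matrix satisfying the NAE condition (i.e., ε̄(m) ≥ −1). Then there is a restriction of m to some set R of k−1 rows such that ε̄(m|_R) = −1. -/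
open scoped Classical

/-- `naeRows m C` is the set of rows of `m` that are nonconstant on the columns in `C`. -/
noncomputable def naeRows {n k : ℕ} (m : Matrix (Fin n) (Fin k) ℝ) (C : Finset (Fin k)) :
    Finset (Fin n) :=
  Finset.univ.filter (fun i => ∃ j ∈ C, ∃ j' ∈ C, m i j ≠ m i j')

/-- `eps m C = |NAE(m|^C)| - |C|`. -/
noncomputable def eps {n k : ℕ} (m : Matrix (Fin n) (Fin k) ℝ) (C : Finset (Fin k)) : ℤ :=
  (naeRows m C).card - C.card

/-- `epsRestrict m R C` is `ε` for the restriction of `m` to the rows in `R`: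
`|NAE(m|_R|^C)| - |C|`. -/
noncomputable def epsRestrict {n k : ℕ} (m : Matrix (Fin n) (Fin k) ℝ) (R : Finset (Fin n))
    (C : Finset (Fin k)) : ℤ :=
  (naeRows m C ∩ R).card - C.card

lemma naeRows_mono {n k : ℕ} (m : Matrix (Fin n) (Fin k) ℝ) {C D : Finset (Fin k)}
    (h : C ⊆ D) : naeRows m C ⊆ naeRows m D := by
  intro i hi
  simp only [naeRows, Finset.mem_filter, Finset.mem_univ, true_and] at hi ⊢
  obtain ⟨j, hj, j', hj', hne⟩ := hi
  exact ⟨j, h hj, j', h hj', hne⟩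

lemma naeRows_union_subset {n k : ℕ} (m : Matrix (Fin n) (Fin k) ℝ) {C D : Finset (Fin k)}
    (h : (C ∩ D).Nonempty) : naeRows m (C ∪ D) ⊆ naeRows m C ∪ naeRows m D := by
  intro i hi
  by_contra hic
  simp only [naeRows, Finset.mem_union, Finset.mem_filter, Finset.mem_univ, true_and,
    not_or, not_exists, not_and, ne_eq, not_not] at hi hic
  obtain ⟨x, hx⟩ := h
  rw [Finset.mem_inter] at hx
  obtain ⟨j, hj, j', hj', hne⟩ := hi
  have key : ∀ a ∈ C ∪ D, m i a = m i x := by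
    intro a ha
    rcases Finset.mem_union.mp ha with ha | ha
    · exact hic.1 a ha x hx.1
    · exact hic.2 a ha x hx.2
  exact hne (by rw [key j (Finset.mem_union.mpr hj), key j' (Finset.mem_union.mpr hj')])

/-- `Good m S` : the restriction to rows `S` satisfies the NAE condition. -/
def Good {n k : ℕ} (m : Matrix (Fin n) (Fin k) ℝ) (S : Finset (Fin n)) : Prop :=
  ∀ C : Finset (Fin k), C.Nonempty → (C.card : ℤ) ≤ ((naeRows m C ∩ S).card : ℤ) + 1

/-- `Tight m S C` : `C` is a nonempty tight set of columns for the restriction to `S`. -/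
def Tight {n k : ℕ} (m : Matrix (Fin n) (Fin k) ℝ) (S : Finset (Fin n))
    (C : Finset (Fin k)) : Prop :=
  C.Nonempty ∧ ((naeRows m C ∩ S).card : ℤ) = (C.card : ℤ) - 1

lemma tight_union {n k : ℕ} {m : Matrix (Fin n) (Fin k) ℝ} {S : Finset (Fin n)}
    (hS : Good m S) {C D : Finset (Fin k)} (hC : Tight m S C) (hD : Tight m S D)
    (hI : (C ∩ D).Nonempty) : Tight m S (C ∪ D) := by
  have hsub : naeRows m (C ∪ D) ∩ S ⊆ (naeRows m C ∩ S) ∪ (naeRows m D ∩ S) := by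
    rw [← Finset.union_inter_distrib_right]
    exact Finset.inter_subset_inter_right (naeRows_union_subset m hI)
  have hIsub : naeRows m (C ∩ D) ∩ S ⊆ (naeRows m C ∩ S) ∩ (naeRows m D ∩ S) := by
    intro i hi
    rw [Finset.mem_inter] at hi
    simp only [Finset.mem_inter]
    exact ⟨⟨naeRows_mono m Finset.inter_subset_left hi.1, hi.2⟩,
      ⟨naeRows_mono m Finset.inter_subset_right hi.1, hi.2⟩⟩
  have h1 : ((naeRows m (C ∪ D) ∩ S).card : ℤ) ≤
      ((naeRows m C ∩ S).card : ℤ) + ((naeRows m D ∩ S).card : ℤ)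
      - (((naeRows m C ∩ S) ∩ (naeRows m D ∩ S)).card : ℤ) := by
    have h1' := Finset.card_union_add_card_inter (naeRows m C ∩ S) (naeRows m D ∩ S)
    have h2 := Finset.card_le_card hsub
    have h1'' : (((naeRows m C ∩ S) ∪ (naeRows m D ∩ S)).card : ℤ)
        + (((naeRows m C ∩ S) ∩ (naeRows m D ∩ S)).card : ℤ)
        = ((naeRows m C ∩ S).card : ℤ) + ((naeRows m D ∩ S).card : ℤ) := by exact_mod_cast h1'
    linarith [Int.ofNat_le.mpr h2]
  have hlow : ((C ∩ D).card : ℤ) ≤ (((naeRows m C ∩ S) ∩ (naeRows m D ∩ S)).card : ℤ) + 1 := by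
    calc ((C ∩ D).card : ℤ) ≤ ((naeRows m (C ∩ D) ∩ S).card : ℤ) + 1 := hS _ hI
    _ ≤ _ := by exact_mod_cast add_le_add_left (Int.ofNat_le.mpr (Finset.card_le_card hIsub)) 1
  have hcard : ((C ∪ D).card : ℤ) + ((C ∩ D).card : ℤ) = (C.card : ℤ) + D.card := by
    exact_mod_cast congrArg (Nat.cast : ℕ → ℤ) (Finset.card_union_add_card_inter C D)
  have hup : ((naeRows m (C ∪ D) ∩ S).card : ℤ) ≤ ((C ∪ D).card : ℤ) - 1 := by
    linarith [hC.2, hD.2]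
  have hne : (C ∪ D).Nonempty := hC.1.mono Finset.subset_union_left
  exact ⟨hne, le_antisymm hup (by linarith [hS _ hne])⟩

lemma exists_good_subset {n k : ℕ} (hk : 0 < k) (m : Matrix (Fin n) (Fin k) ℝ) :
    ∀ S : Finset (Fin n), Good m S → ∃ R, R ⊆ S ∧ R.card = k - 1 ∧ Good m R := by
  intro S
  induction S using Finset.strongInduction with
  | _ S ih =>
    intro hS
    haveI : Nonempty (Fin k) := ⟨⟨0, hk⟩⟩
    have huniv : (Finset.univ : Finset (Fin k)).Nonempty := Finset.univ_nonempty
    have hkS : k ≤ S.card + 1 := by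
      have h1 := hS Finset.univ huniv
      have h2 : (naeRows m Finset.univ ∩ S).card ≤ S.card :=
        Finset.card_le_card Finset.inter_subset_right
      rw [Finset.card_univ, Fintype.card_fin] at h1
      have h2' : ((naeRows m Finset.univ ∩ S).card : ℤ) ≤ (S.card : ℤ) := by exact_mod_cast h2
      exact_mod_cast h1.trans (by linarith : ((naeRows m Finset.univ ∩ S).card : ℤ) + 1 ≤ (S.card : ℤ) + 1)
    rcases eq_or_ne S.card (k - 1) with heq | hne
    · exact ⟨S, subset_rfl, heq, hS⟩
    have hSk : k ≤ S.card := by omega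
    have hrem : ∃ i ∈ S, Good m (S.erase i) := by
      by_contra hcon
      push_neg at hcon
      -- every row of S is critical: it lies in naeRows of some tight set
      have hcrit : ∀ i ∈ S, ∃ C, Tight m S C ∧ i ∈ naeRows m C := by
        intro i hi
        have hbad := hcon i hi
        simp only [Good] at hbad
        push_neg at hbad
        obtain ⟨C, hCne, hClt⟩ := hbad
        have hmem : i ∈ naeRows m C := by
          by_contra hni
          have heqset : naeRows m C ∩ S.erase i = naeRows m C ∩ S := by
            ext x
            simp only [Finset.mem_inter, Finset.mem_erase]
            constructor
            · rintro ⟨hx, _, hxS⟩; exact ⟨hx, hxS⟩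
            · rintro ⟨hx, hxS⟩
              exact ⟨hx, fun hxe => hni (hxe ▸ hx), hxS⟩
          rw [heqset] at hClt
          linarith [hS C hCne]
        have hiNS : i ∈ naeRows m C ∩ S := Finset.mem_inter.mpr ⟨hmem, hi⟩
        have heqset2 : naeRows m C ∩ S.erase i = (naeRows m C ∩ S).erase i := by
          ext x
          simp only [Finset.mem_inter, Finset.mem_erase]
          tauto
        have hcard : (naeRows m C ∩ S).card ≤ (naeRows m C ∩ S.erase i).card + 1 := by
          rw [heqset2, Finset.card_erase_of_mem hiNS]
          have := Finset.card_pos.mpr ⟨i, hiNS⟩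
          omega
        have htight : ((naeRows m C ∩ S).card : ℤ) = (C.card : ℤ) - 1 := by
          have h1 := hS C hCne
          have h2 : ((naeRows m C ∩ S).card : ℤ) ≤ ((naeRows m C ∩ S.erase i).card : ℤ) + 1 := by
            exact_mod_cast hcard
          linarith
        exact ⟨C, ⟨hCne, htight⟩, hmem⟩
      -- maximal tight supersets
      have hmax : ∀ C, Tight m S C → ∃ D, Tight m S D ∧ C ⊆ D ∧
          ∀ E, Tight m S E → D ⊆ E → D = E := by
        intro C hC
        obtain ⟨D, hDmem, hDmax⟩ := Finset.exists_max_image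
          (Finset.univ.filter (fun D => Tight m S D ∧ C ⊆ D)) Finset.card
          ⟨C, by simp [hC]⟩
        simp only [Finset.mem_filter, Finset.mem_univ, true_and] at hDmem
        refine ⟨D, hDmem.1, hDmem.2, fun E hE hDE => ?_⟩
        have hEcard : E.card ≤ D.card := hDmax E (by
          simp only [Finset.mem_filter, Finset.mem_univ, true_and]
          exact ⟨hE, hDmem.2.trans hDE⟩)
        exact Finset.eq_of_subset_of_card_le hDE hEcard
      set F : Finset (Finset (Fin k)) :=
        Finset.univ.filter (fun D => Tight m S D ∧ ∀ E, Tight m S E → D ⊆ E → D = E) with hF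
      have hFmem : ∀ D ∈ F, Tight m S D ∧ ∀ E, Tight m S E → D ⊆ E → D = E := by
        intro D hD
        simpa only [hF, Finset.mem_filter, Finset.mem_univ, true_and] using hD
      have hdisj : ∀ D1 ∈ F, ∀ D2 ∈ F, D1 ≠ D2 → Disjoint D1 D2 := by
        intro D1 h1 D2 h2 hne12
        by_contra hnd
        have hI : (D1 ∩ D2).Nonempty := Finset.not_disjoint_iff_nonempty_inter.mp hnd
        have hU : Tight m S (D1 ∪ D2) :=
          tight_union hS (hFmem D1 h1).1 (hFmem D2 h2).1 hI
        have e1 : D1 = D1 ∪ D2 := (hFmem D1 h1).2 _ hU Finset.subset_union_left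
        have e2 : D2 = D1 ∪ D2 := (hFmem D2 h2).2 _ hU Finset.subset_union_right
        exact hne12 (e1.trans e2.symm)
      have hcover : S ⊆ F.biUnion (fun D => naeRows m D ∩ S) := by
        intro i hi
        obtain ⟨C, hC, hiC⟩ := hcrit i hi
        obtain ⟨D, hD, hCD, hDmax⟩ := hmax C hC
        refine Finset.mem_biUnion.mpr ⟨D, ?_, Finset.mem_inter.mpr ⟨naeRows_mono m hCD hiC, hi⟩⟩
        simp only [hF, Finset.mem_filter, Finset.mem_univ, true_and]
        exact ⟨hD, hDmax⟩
      have hSne : S.Nonempty := Finset.card_pos.mp (by omega)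
      have hFne : F.Nonempty := by
        obtain ⟨i, hi⟩ := hSne
        obtain ⟨D, hD, _⟩ := Finset.mem_biUnion.mp (hcover hi)
        exact ⟨D, hD⟩
      have h1 : S.card ≤ ∑ D ∈ F, (naeRows m D ∩ S).card :=
        le_trans (Finset.card_le_card hcover) Finset.card_biUnion_le
      have h2 : (∑ D ∈ F, ((naeRows m D ∩ S).card : ℤ)) = ∑ D ∈ F, ((D.card : ℤ) - 1) :=
        Finset.sum_congr rfl (fun D hD => (hFmem D hD).1.2)
      have h3 : ∑ D ∈ F, D.card = (F.biUnion id).card :=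
        (Finset.card_biUnion hdisj).symm
      have h4 : (F.biUnion id).card ≤ k := by
        have := Finset.card_le_card (Finset.subset_univ (F.biUnion id))
        simpa [Finset.card_univ] using this
      have h5 : (1 : ℤ) ≤ F.card := by exact_mod_cast Finset.card_pos.mpr hFne
      have h6 : (S.card : ℤ) ≤ ∑ D ∈ F, ((naeRows m D ∩ S).card : ℤ) := by
        exact_mod_cast Nat.cast_le.mpr h1
      rw [h2, Finset.sum_sub_distrib, Finset.sum_const, nsmul_eq_mul, mul_one] at h6
      have h7 : (∑ D ∈ F, (D.card : ℤ)) ≤ (k : ℤ) := by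
        rw [← Nat.cast_sum]
        exact_mod_cast h3 ▸ h4
      have h8 : (k : ℤ) ≤ (S.card : ℤ) := by exact_mod_cast hSk
      linarith
    obtain ⟨i, hi, hgood⟩ := hrem
    obtain ⟨R, hRsub, hRcard, hRgood⟩ := ih (S.erase i) (Finset.erase_ssubset hi) hgood
    exact ⟨R, hRsub.trans (Finset.erase_subset i S), hRcard, hRgood⟩

/-- If `m` satisfies the NAE condition (`ε̄(m) ≥ -1`, i.e. `ε(m|^C) ≥ -1` for every
nonempty set of columns `C`), then there is a restriction of `m` to some set `R` of
`k - 1` rows such that `ε̄(m|_R) = -1`. -/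
theorem nae_condition_restrict_to_rows {n k : ℕ} (hk : 0 < k)
    (m : Matrix (Fin n) (Fin k) ℝ)
    (h : ∀ C : Finset (Fin k), C.Nonempty → -1 ≤ eps m C) :
    ∃ R : Finset (Fin n), R.card = k - 1 ∧
      (∀ C : Finset (Fin k), C.Nonempty → -1 ≤ epsRestrict m R C) ∧
      (∃ C : Finset (Fin k), C.Nonempty ∧ epsRestrict m R C = -1) := by
  haveI : Nonempty (Fin k) := ⟨⟨0, hk⟩⟩
  have hgood : Good m Finset.univ := by
    intro C hC
    have := h C hC
    simp only [eps] at this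
    rw [Finset.inter_univ]
    linarith
  obtain ⟨R, -, hRcard, hRgood⟩ := exists_good_subset hk m Finset.univ hgood
  refine ⟨R, hRcard, ?_, ?_⟩
  · intro C hC
    have := hRgood C hC
    simp only [epsRestrict]
    linarith
  · refine ⟨{⟨0, hk⟩}, Finset.singleton_nonempty _, ?_⟩
    have hempty : naeRows m {(⟨0, hk⟩ : Fin k)} = ∅ := by
      ext i
      simp [naeRows]
    simp [epsRestrict, hempty]
end

section
/- Let m be an n×k real matrix and let S, T ⊆ {1,…,n}. If the row space of H(m|_S) is strictly contained in the row space of H(m|_{S ∪ T}), then there is a single row index t ∈ T such that the row space of H(m|_S) is strictly contained in the row space of H(m|_{S ∪ {t}}). -/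
/-- `hadRow m S` is the Hadamard product of the rows of `m` indexed by `S`,
i.e. the vector with `j`-th entry `∏_{i ∈ S} m i j` (the all-ones vector for `S = ∅`). -/
noncomputable def hadRow {n k : ℕ} (m : Matrix (Fin n) (Fin k) ℝ) (S : Finset (Fin n)) :
    Fin k → ℝ :=
  fun j => ∏ i ∈ S, m i j

/-- The row space of the Hadamard extension `H(m|_R)`: the span in `ℝ^k` of the
vectors `m_S` for all `S ⊆ R`. -/
noncomputable def hextRowSpace {n k : ℕ} (m : Matrix (Fin n) (Fin k) ℝ) (R : Finset (Fin n)) :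
    Submodule ℝ (Fin k → ℝ) :=
  Submodule.span ℝ {x | ∃ S ⊆ R, x = hadRow m S}

theorem hextRowSpace_mono {n k : ℕ} (m : Matrix (Fin n) (Fin k) ℝ) {R R' : Finset (Fin n)}
    (h : R ⊆ R') : hextRowSpace m R ≤ hextRowSpace m R' := by
  apply Submodule.span_mono
  rintro x ⟨A, hA, rfl⟩
  exact ⟨A, hA.trans h, rfl⟩

/-- If the row space of `H(m|_S)` is strictly contained in the row space of `H(m|_{S ∪ T})`,
then there is a single row index `t ∈ T` such that the row space of `H(m|_S)` is strictly
contained in the row space of `H(m|_{S ∪ {t}})`. -/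
theorem rowSpace_strict_mono_single_row {n k : ℕ} (m : Matrix (Fin n) (Fin k) ℝ)
    (S T : Finset (Fin n))
    (h : hextRowSpace m S < hextRowSpace m (S ∪ T)) :
    ∃ t ∈ T, hextRowSpace m S < hextRowSpace m (S ∪ {t}) := by
  by_contra hc
  push_neg at hc
  have hle : ∀ t ∈ T, hextRowSpace m (S ∪ {t}) ≤ hextRowSpace m S := by
    intro t ht
    have h1 : hextRowSpace m S ≤ hextRowSpace m (S ∪ {t}) :=
      hextRowSpace_mono m (Finset.subset_union_left)
    exact le_of_eq ((lt_or_eq_of_le h1).resolve_left (hc t ht)).symm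
  -- multiplication by row t preserves the space, for t ∈ T \ S
  have hmul : ∀ t ∈ T, t ∉ S → ∀ v ∈ hextRowSpace m S,
      (fun j => v j * m t j) ∈ hextRowSpace m S := by
    intro t ht hts v hv
    set L : (Fin k → ℝ) →ₗ[ℝ] (Fin k → ℝ) := LinearMap.mulLeft ℝ (fun j => m t j) with hL
    have hmem : L v ∈ Submodule.map L (hextRowSpace m S) := Submodule.mem_map_of_mem hv
    have hmap : Submodule.map L (hextRowSpace m S) ≤ hextRowSpace m (S ∪ {t}) := by
      rw [hextRowSpace, Submodule.map_span, Submodule.span_le]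
      rintro x ⟨y, ⟨B, hB, rfl⟩, rfl⟩
      apply Submodule.subset_span
      refine ⟨insert t B, ?_, ?_⟩
      · intro i hi
        rcases Finset.mem_insert.1 hi with rfl | hi
        · exact Finset.mem_union_right _ (Finset.mem_singleton_self _)
        · exact Finset.mem_union_left _ (hB hi)
      · funext j
        simp only [hL, LinearMap.mulLeft_apply, hadRow, Pi.mul_apply]
        rw [Finset.prod_insert (fun hcon => hts (hB hcon))]
    have : L v ∈ hextRowSpace m S := hle t ht (hmap hmem)
    have hLv : L v = fun j => v j * m t j := by
      funext j
      simp [hL, mul_comm]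
    rwa [hLv] at this
  have key : ∀ F : Finset (Fin n), (∀ t ∈ F, t ∈ T ∧ t ∉ S) →
      ∀ v ∈ hextRowSpace m S, (fun j => v j * ∏ i ∈ F, m i j) ∈ hextRowSpace m S := by
    intro F
    induction F using Finset.induction_on with
    | empty => intro _ v hv; simpa using hv
    | @insert t F hnot ih =>
      intro hF v hv
      have h1 := ih (fun s hs => hF s (Finset.mem_insert_of_mem hs)) v hv
      have h2 := hmul t (hF t (Finset.mem_insert_self _ _)).1
        (hF t (Finset.mem_insert_self _ _)).2 _ h1
      have : (fun j => v j * ∏ i ∈ insert t F, m i j)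
          = fun j => (v j * ∏ i ∈ F, m i j) * m t j := by
        funext j
        rw [Finset.prod_insert hnot]
        ring
      rw [this]
      exact h2
  have hbig : hextRowSpace m (S ∪ T) ≤ hextRowSpace m S := by
    rw [hextRowSpace, Submodule.span_le]
    rintro x ⟨A, hA, rfl⟩
    have hsplit : hadRow m A = fun j => (∏ i ∈ A ∩ S, m i j) * ∏ i ∈ A \ S, m i j := by
      funext j
      rw [hadRow, ← Finset.prod_union (Finset.disjoint_sdiff_inter A S).symm,
        Finset.union_comm, Finset.sdiff_union_inter]
    have hAS : hadRow m (A ∩ S) ∈ hextRowSpace m S :=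
      Submodule.subset_span ⟨A ∩ S, Finset.inter_subset_right, rfl⟩
    have := key (A \ S) (fun t ht => by
      have htA := Finset.mem_sdiff.1 ht
      rcases Finset.mem_union.1 (hA htA.1) with hS | hT
      · exact absurd hS htA.2
      · exact ⟨hT, htA.2⟩) _ hAS
    rw [hsplit]
    exact this
  exact absurd hbig (not_le_of_gt h)
end

section
/- Let m be an n×k real matrix. Then H(m) has full column rank if and only if there exists a set R of at most k−1 rows of m such that H(m|_R) has full column rank. -/
open Matrix

namespace HextAux

variable {n k : ℕ}

/-- `lc m c S = ∑ j, c j * ∏_{i∈S} m i j`, the linear combination of the `S`-row entries. -/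
def lc (m : Matrix (Fin n) (Fin k) ℝ) (c : Fin k → ℝ) (S : Finset (Fin n)) : ℝ :=
  ∑ j, c j * ∏ i ∈ S, m i j

/-- The kernel of the Hadamard extension restricted to rows in `R`. -/
def Ker (m : Matrix (Fin n) (Fin k) ℝ) (R : Finset (Fin n)) : Submodule ℝ (Fin k → ℝ) where
  carrier := {c | ∀ S, S ⊆ R → lc m c S = 0}
  add_mem' := by
    intro a b ha hb S hS
    have h : lc m (a + b) S = lc m a S + lc m b S := by
      simp [lc, add_mul, Finset.sum_add_distrib]
    rw [h, ha S hS, hb S hS, add_zero]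
  zero_mem' := by intro S hS; simp [lc]
  smul_mem' := by
    intro r a ha S hS
    have h : lc m (r • a) S = r * lc m a S := by
      simp [lc, Finset.mul_sum, mul_assoc]
    rw [h, ha S hS, mul_zero]

lemma mem_Ker {m : Matrix (Fin n) (Fin k) ℝ} {R : Finset (Fin n)} {c : Fin k → ℝ} :
    c ∈ Ker m R ↔ ∀ S, S ⊆ R → lc m c S = 0 := Iff.rfl

lemma Ker_antitone {m : Matrix (Fin n) (Fin k) ℝ} {R R' : Finset (Fin n)} (h : R ⊆ R') :
    Ker m R' ≤ Ker m R := fun c hc S hS => hc S (hS.trans h)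

/-- If adding any row to `R` does not change the kernel, then every element of the kernel
kills all linear combinations, over arbitrary sets `S`. -/
lemma Ker_step (m : Matrix (Fin n) (Fin k) ℝ) (R : Finset (Fin n))
    (h : ∀ i, Ker m (insert i R) = Ker m R) :
    ∀ (N : ℕ) (S : Finset (Fin n)), (S \ R).card ≤ N → ∀ c ∈ Ker m R, lc m c S = 0 := by
  intro N
  induction N with
  | zero =>
    intro S hS c hc
    have hsub : S ⊆ R := by
      intro x hx
      by_contra hxR
      have hx' : x ∈ S \ R := Finset.mem_sdiff.mpr ⟨hx, hxR⟩
      have := Finset.card_pos.mpr ⟨x, hx'⟩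
      omega
    exact hc S hsub
  | succ N ih =>
    intro S hS c hc
    by_cases hsub : S ⊆ R
    · exact hc S hsub
    · obtain ⟨i, hiS, hiR⟩ : ∃ i, i ∈ S ∧ i ∉ R := by
        by_contra h'
        push_neg at h'
        exact hsub fun x hx => h' x hx
      set c' : Fin k → ℝ := fun j => c j * m i j with hc'def
      have hc' : c' ∈ Ker m R := by
        intro T hT
        have hmem : c ∈ Ker m (insert i R) := (h i).symm ▸ hc
        have hT' : insert i T ⊆ insert i R := Finset.insert_subset_insert _ hT
        have h0 := hmem (insert i T) hT'
        have hiT : i ∉ T := fun hiT => hiR (hT hiT)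
        have heq : lc m c' T = lc m c (insert i T) := by
          simp only [lc, hc'def, Finset.prod_insert hiT]
          exact Finset.sum_congr rfl fun j _ => by ring
        rw [heq, h0]
      have hcard : ((S.erase i) \ R).card ≤ N := by
        have heq : (S.erase i) \ R = (S \ R).erase i := by
          ext x
          simp only [Finset.mem_sdiff, Finset.mem_erase]
          tauto
        rw [heq]
        have hi' : i ∈ S \ R := Finset.mem_sdiff.mpr ⟨hiS, hiR⟩
        have h1 := Finset.card_erase_of_mem hi'
        have h2 := Finset.card_pos.mpr ⟨i, hi'⟩
        omega
      have h1 := ih (S.erase i) hcard c' hc'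
      have heq : lc m c S = lc m c' (S.erase i) := by
        simp only [lc, hc'def]
        refine Finset.sum_congr rfl fun j _ => ?_
        rw [← Finset.mul_prod_erase S _ hiS]
        ring
      rw [heq, h1]

lemma Ker_saturated (m : Matrix (Fin n) (Fin k) ℝ) (R : Finset (Fin n))
    (h : ∀ i, Ker m (insert i R) = Ker m R) :
    Ker m R ≤ Ker m Finset.univ := fun c hc S _ =>
  Ker_step m R h (S \ R).card S le_rfl c hc

/-- Greedy construction of a small row set with trivial kernel. -/
lemma greedy_s7 (m : Matrix (Fin n) (Fin k) ℝ) (hall : Ker m Finset.univ = ⊥) :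
    ∃ R : Finset (Fin n), R.card ≤ k - 1 ∧ Ker m R = ⊥ := by
  rcases Nat.eq_zero_or_pos k with hk | hk
  · refine ⟨∅, by simp, ?_⟩
    subst hk
    have : Subsingleton (Fin 0 → ℝ) := ⟨fun a b => funext fun i => Fin.elim0 i⟩
    exact Subsingleton.elim _ _
  · have main : ∀ t (R : Finset (Fin n)),
        Module.finrank ℝ (Ker m R) ≤ t → R.card + Module.finrank ℝ (Ker m R) ≤ k - 1 →
        ∃ R', R'.card ≤ k - 1 ∧ Ker m R' = ⊥ := by
      intro t
      induction t with
      | zero =>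
        intro R h1 h2
        refine ⟨R, by omega, ?_⟩
        exact Submodule.finrank_eq_zero.mp (Nat.le_zero.mp h1)
      | succ t ih =>
        intro R h1 h2
        by_cases hbot : Ker m R = ⊥
        · exact ⟨R, by
            have : Module.finrank ℝ (Ker m R) = 0 := by rw [hbot]; simp
            omega, hbot⟩
        · have hne : ¬ ∀ i, Ker m (insert i R) = Ker m R := by
            intro hi
            apply hbot
            rw [← hall]
            exact le_antisymm (Ker_saturated m R hi) (Ker_antitone (Finset.subset_univ R))
          obtain ⟨i, hi⟩ := not_forall.mp hne
          have hlt : Ker m (insert i R) < Ker m R :=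
            lt_of_le_of_ne (Ker_antitone (Finset.subset_insert i R)) hi
          have hr : Module.finrank ℝ (Ker m (insert i R)) < Module.finrank ℝ (Ker m R) :=
            Submodule.finrank_lt_finrank_of_lt hlt
          have hcard := Finset.card_insert_le i R
          exact ih (insert i R) (by omega) (by omega)
    have hne : Ker m (∅ : Finset (Fin n)) ≠ ⊤ := by
      intro htop
      have h1 : (fun _ => (1 : ℝ)) ∈ Ker m (∅ : Finset (Fin n)) := htop ▸ Submodule.mem_top
      have h2 := h1 ∅ (Finset.Subset.refl _)
      simp only [lc, Finset.prod_empty, mul_one, Finset.sum_const, Finset.card_univ,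
        Fintype.card_fin, nsmul_eq_mul] at h2
      have : (k : ℝ) ≠ 0 := Nat.cast_ne_zero.mpr (by omega)
      simp at h2
      omega
    have h0 : Module.finrank ℝ (Ker m (∅ : Finset (Fin n))) < k := by
      have := Submodule.finrank_lt hne
      rwa [Module.finrank_pi, Fintype.card_fin] at this
    exact main (k - 1) ∅ (by omega) (by simpa using by omega)

lemma li_hext_iff (m : Matrix (Fin n) (Fin k) ℝ) :
    LinearIndependent ℝ (hext m)ᵀ ↔ Ker m Finset.univ = ⊥ := by
  rw [show LinearIndependent ℝ (hext m)ᵀ ↔ _ from Fintype.linearIndependent_iff, Submodule.eq_bot_iff]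
  have key : ∀ g : Fin k → ℝ,
      (∑ j, g j • (hext m)ᵀ j = 0) ↔ g ∈ Ker m Finset.univ := by
    intro g
    constructor
    · intro h S _
      have := congrFun h S
      simpa [hext, lc, Finset.sum_apply, Matrix.transpose_apply] using this
    · intro h
      funext S
      have := h S (Finset.subset_univ S)
      simpa [hext, lc, Finset.sum_apply, Matrix.transpose_apply] using this
  constructor
  · intro h c hc
    funext j
    exact h c ((key c).mpr hc) j
  · intro h g hg j
    have : g = 0 := h g ((key g).mp hg)
    simp [this]

lemma li_hextRestrict_iff (m : Matrix (Fin n) (Fin k) ℝ) (R : Finset (Fin n)) :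
    LinearIndependent ℝ (hextRestrict m R)ᵀ ↔ Ker m R = ⊥ := by
  rw [show LinearIndependent ℝ (hextRestrict m R)ᵀ ↔ _ from Fintype.linearIndependent_iff, Submodule.eq_bot_iff]
  have key : ∀ g : Fin k → ℝ,
      (∑ j, g j • (hextRestrict m R)ᵀ j = 0) ↔ g ∈ Ker m R := by
    intro g
    constructor
    · intro h S hS
      have := congrFun h ⟨S, hS⟩
      simpa [hextRestrict, lc, Finset.sum_apply, Matrix.transpose_apply] using this
    · intro h
      funext S
      have := h S.1 S.2
      simpa [hextRestrict, lc, Finset.sum_apply, Matrix.transpose_apply] using this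
  constructor
  · intro h c hc
    funext j
    exact h c ((key c).mpr hc) j
  · intro h g hg j
    have : g = 0 := h g ((key g).mp hg)
    simp [this]

end HextAux

/-- `H(m)` has full column rank if and only if there exists a set `R` of at most `k - 1`
rows of `m` such that `H(m|_R)` has full column rank. -/
theorem hext_fullColRank_iff_restrict {n k : ℕ} (m : Matrix (Fin n) (Fin k) ℝ) :
    LinearIndependent ℝ (hext m)ᵀ ↔
      ∃ R : Finset (Fin n), R.card ≤ k - 1 ∧
        LinearIndependent ℝ (hextRestrict m R)ᵀ := by
  rw [HextAux.li_hext_iff]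
  constructor
  · intro h
    obtain ⟨R, hR, hbot⟩ := HextAux.greedy_s7 m h
    exact ⟨R, hR, (HextAux.li_hextRestrict_iff m R).mpr hbot⟩
  · rintro ⟨R, _, hli⟩
    have hbot := (HextAux.li_hextRestrict_iff m R).mp hli
    exact le_bot_iff.mp (hbot ▸ HextAux.Ker_antitone (Finset.subset_univ R))
end

section
/- Let k ≥ 1 and n = ⌈log₂ k⌉. Then the set of n×k real matrices m for which the Hadamard extension H(m) does not have full column rank has Lebesgue measure zero in ℝ^{n×k}. In particular, almost all ⌈log₂ k⌉ × k real matrices m have H(m) of full column rank. -/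
open MeasureTheory

/-- The zero set of a nonzero multivariate polynomial over `ℝ` in `Fin N` variables
has Lebesgue measure zero. -/
lemma mvpoly_zero_set_null_fin :
    ∀ (N : ℕ) (p : MvPolynomial (Fin N) ℝ), p ≠ 0 →
      volume {x : Fin N → ℝ | MvPolynomial.eval x p = 0} = 0 := by
  intro N
  induction N with
  | zero =>
    intro p hp
    convert measure_empty (μ := (volume : Measure (Fin 0 → ℝ)))
    ext x
    simp only [Set.mem_setOf_eq, Set.mem_empty_iff_false, iff_false]
    intro h
    apply hp
    rw [MvPolynomial.eq_C_of_isEmpty p] at h ⊢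
    rw [MvPolynomial.eval_C] at h
    rw [h, map_zero]
  | succ N ih =>
    intro p hp
    set q : Polynomial (MvPolynomial (Fin N) ℝ) := MvPolynomial.finSuccEquiv ℝ N p with hq
    have hq0 : q ≠ 0 := by
      intro h0
      apply hp
      have := (MvPolynomial.finSuccEquiv ℝ N).injective
        (a₁ := p) (a₂ := 0) (by rw [← hq, h0, map_zero])
      exact this
    have hlc : q.leadingCoeff ≠ 0 := Polynomial.leadingCoeff_ne_zero.mpr hq0
    have hZ : volume {y : Fin N → ℝ | MvPolynomial.eval y q.leadingCoeff = 0} = 0 := ih _ hlc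
    -- the set of zeros, seen inside `(Fin N → ℝ) × ℝ` (tail first, head second)
    set T : Set ((Fin N → ℝ) × ℝ) :=
      {z | MvPolynomial.eval (Fin.cons z.2 z.1) p = 0} with hTdef
    have hcons : Continuous fun z : (Fin N → ℝ) × ℝ => (Fin.cons z.2 z.1 : Fin (N+1) → ℝ) := by
      apply continuous_pi
      intro i
      refine Fin.cases ?_ ?_ i
      · simpa using continuous_snd
      · intro j
        simpa [Function.comp_def] using (continuous_apply j).comp continuous_fst
    have hTm : MeasurableSet T := by
      have : T = (fun z : (Fin N → ℝ) × ℝ =>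
          MvPolynomial.eval (Fin.cons z.2 z.1) p) ⁻¹' {0} := rfl
      rw [this]
      exact (isClosed_singleton.preimage
        ((MvPolynomial.continuous_eval p).comp hcons)).measurableSet
    have hTnull :
        (volume : Measure (Fin N → ℝ)).prod (volume : Measure ℝ) T = 0 := by
      rw [Measure.measure_prod_null hTm]
      rw [Filter.EventuallyEq, ae_iff]
      refine measure_mono_null ?_ hZ
      intro y hy
      simp only [Set.mem_setOf_eq, Pi.zero_apply] at hy ⊢
      by_contra hyc
      apply hy
      have hqy : Polynomial.map (MvPolynomial.eval y) q ≠ 0 := by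
        intro h0
        apply hyc
        have h1 := congrArg (fun r : Polynomial ℝ => r.coeff q.natDegree) h0
        simp only [Polynomial.coeff_map, Polynomial.coeff_zero] at h1
        rw [Polynomial.leadingCoeff]
        exact h1
      have hslice : Prod.mk y ⁻¹' T ⊆
          {a : ℝ | Polynomial.IsRoot (Polynomial.map (MvPolynomial.eval y) q) a} := by
        intro a ha
        simp only [Set.mem_preimage, hTdef, Set.mem_setOf_eq] at ha
        simp only [Set.mem_setOf_eq, Polynomial.IsRoot]
        show Polynomial.eval a
          (Polynomial.map (MvPolynomial.eval y) (MvPolynomial.finSuccEquiv ℝ N p)) = 0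
        rw [← MvPolynomial.eval_eq_eval_mv_eval']
        exact ha
      exact measure_mono_null hslice
        ((Polynomial.finite_setOf_isRoot hqy).measure_zero _)
    -- transfer back to `Fin (N+1) → ℝ`
    have mp := volume_preserving_piFinSuccAbove (fun _ : Fin (N+1) => ℝ) 0
    set e := MeasurableEquiv.piFinSuccAbove (fun _ : Fin (N+1) => ℝ) 0 with he
    set T2 : Set (ℝ × (Fin N → ℝ)) := Prod.swap ⁻¹' T with hT2
    have hT2m : MeasurableSet T2 := hTm.preimage measurable_swap
    have hx : ∀ x : Fin (N+1) → ℝ,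
        (Fin.cons (x 0) (fun j => x ((0 : Fin (N+1)).succAbove j)) : Fin (N+1) → ℝ) = x := by
      intro x
      funext i
      exact Fin.cases rfl (fun j => rfl) i
    have hpre : {x : Fin (N+1) → ℝ | MvPolynomial.eval x p = 0} = e ⁻¹' T2 := by
      ext x
      have hmem : x ∈ e ⁻¹' T2 ↔ MvPolynomial.eval
          (Fin.cons (x 0) (fun j => x ((0 : Fin (N+1)).succAbove j)) : Fin (N+1) → ℝ) p = 0 :=
        Iff.rfl
      rw [Set.mem_setOf_eq, hmem, hx x]
    rw [hpre, mp.measure_preimage hT2m.nullMeasurableSet]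
    have : (volume : Measure (ℝ × (Fin N → ℝ))) T2
        = (volume : Measure (Fin N → ℝ)).prod (volume : Measure ℝ) T := by
      rw [Measure.volume_eq_prod, ← Measure.prod_swap,
        Measure.map_apply measurable_swap hT2m]
      congr 1
    rw [this]
    exact hTnull

/-- The zero set of a nonzero multivariate polynomial over `ℝ` in finitely many variables
has Lebesgue measure zero. -/
lemma mvpoly_zero_set_null (σ : Type*) [Fintype σ] (p : MvPolynomial σ ℝ) (hp : p ≠ 0) :
    volume {x : σ → ℝ | MvPolynomial.eval x p = 0} = 0 := by
  classical
  set e : σ ≃ Fin (Fintype.card σ) := Fintype.equivFin σ with hedef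
  have mp := volume_measurePreserving_piCongrLeft (fun _ : σ => ℝ) e.symm
  set φ := MeasurableEquiv.piCongrLeft (fun _ : σ => ℝ) e.symm with hφ
  have hS : MeasurableSet {x : σ → ℝ | MvPolynomial.eval x p = 0} := by
    have : {x : σ → ℝ | MvPolynomial.eval x p = 0}
        = (fun x : σ → ℝ => MvPolynomial.eval x p) ⁻¹' {0} := rfl
    rw [this]
    exact (isClosed_singleton.preimage (MvPolynomial.continuous_eval p)).measurableSet
  rw [← mp.measure_preimage hS.nullMeasurableSet]
  have hpre : φ ⁻¹' {x : σ → ℝ | MvPolynomial.eval x p = 0}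
      = {y : Fin (Fintype.card σ) → ℝ |
          MvPolynomial.eval y (MvPolynomial.rename e p) = 0} := by
    ext y
    simp only [Set.mem_preimage, Set.mem_setOf_eq, MvPolynomial.eval_rename]
    have hφy : φ y = fun s => y (e s) := by
      funext s
      have : φ y = (Equiv.piCongrLeft (fun _ : σ => ℝ) e.symm) y := rfl
      rw [this]
      conv_lhs => rw [← Equiv.symm_apply_apply e s]
      exact Equiv.piCongrLeft_apply_apply (fun _ : σ => ℝ) e.symm y (e s)
    rw [hφy]
    rfl
  rw [hpre]
  refine mvpoly_zero_set_null_fin _ _ ?_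
  intro h0
  apply hp
  exact MvPolynomial.rename_injective (⇑e) e.injective
    (by rw [h0, map_zero])

/-- Currying is a measure preserving map from `ℝ^{n×k}` (indexed by pairs) to
`n`-tuples of `k`-tuples. -/
lemma curry_measurePreserving (n k : ℕ) :
    MeasurePreserving (fun (m : Fin n → Fin k → ℝ) (q : Fin n × Fin k) => m q.1 q.2)
      volume volume := by
  have hmeas : Measurable (fun (m : Fin n → Fin k → ℝ) (q : Fin n × Fin k) => m q.1 q.2) :=
    measurable_pi_lambda _ fun q => (measurable_pi_apply q.2).comp (measurable_pi_apply q.1)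
  refine ⟨hmeas, ?_⟩
  rw [show (volume : Measure (Fin n × Fin k → ℝ)) = Measure.pi fun _ => volume from volume_pi]
  refine (Measure.pi_eq fun s hs => ?_).symm
  rw [Measure.map_apply hmeas (MeasurableSet.univ_pi fun q => hs q)]
  have hpre : (fun (m : Fin n → Fin k → ℝ) (q : Fin n × Fin k) => m q.1 q.2) ⁻¹'
      Set.univ.pi s = Set.univ.pi fun i => Set.univ.pi fun j => s (i, j) := by
    ext m
    simp [Set.mem_pi, Prod.forall]
  rw [hpre, volume_pi_pi]
  rw [Fintype.prod_prod_type]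
  exact Finset.prod_congr rfl fun i _ => volume_pi_pi _

/-- Let `k ≥ 1` and `n = ⌈log₂ k⌉`. The set of `n × k` real matrices `m` (identified with
`ℝ^{n×k}` carrying Lebesgue measure) for which the Hadamard extension `H(m)` does not
have full column rank (i.e. the columns `j ↦ (S ↦ ∏_{i ∈ S} m i j)` are not linearly
independent) has Lebesgue measure zero. -/
theorem hext_fullColRank_ae (k : ℕ) (hk : 1 ≤ k) :
    volume {m : Fin (Nat.clog 2 k) → Fin k → ℝ |
      ¬ LinearIndependent ℝ
        (fun j : Fin k => fun S : Finset (Fin (Nat.clog 2 k)) => ∏ i ∈ S, m i j)} = 0 := by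
  classical
  set n := Nat.clog 2 k with hn
  have hk2 : ∀ j : Fin k, (j : ℕ) < 2 ^ n := fun j =>
    lt_of_lt_of_le j.2 (Nat.le_pow_clog one_lt_two k)
  set ι : Fin k → Finset (Fin n) :=
    fun j => Finset.univ.filter (fun l : Fin n => Nat.testBit (j : ℕ) (l : ℕ)) with hι
  have hmem : ∀ (j : Fin k) (l : Fin n), l ∈ ι j ↔ Nat.testBit (j : ℕ) (l : ℕ) = true := by
    intro j l; simp [hι]
  have hbit : ∀ (j : Fin k) (l : ℕ), Nat.testBit (j : ℕ) l = true → l < n := by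
    intro j l h
    by_contra hln
    push_neg at hln
    have hlt : (j : ℕ) < 2 ^ l :=
      lt_of_lt_of_le (hk2 j) (Nat.pow_le_pow_right (by norm_num) hln)
    rw [Nat.testBit_eq_false_of_lt hlt] at h
    exact Bool.false_ne_true h
  have hsub_le : ∀ i j : Fin k, ι i ⊆ ι j → i ≤ j := by
    intro i j hss
    have hand : (i : ℕ) &&& (j : ℕ) = (i : ℕ) := by
      apply Nat.eq_of_testBit_eq
      intro l
      rw [Nat.testBit_and]
      cases hil : Nat.testBit (i : ℕ) l with
      | false => simp
      | true =>
        have hln : l < n := hbit i l hil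
        have h1 : (⟨l, hln⟩ : Fin n) ∈ ι i := (hmem i ⟨l, hln⟩).mpr hil
        have h2 := (hmem j ⟨l, hln⟩).mp (hss h1)
        simp [h2]
    have : (i : ℕ) ≤ (j : ℕ) := by
      calc (i : ℕ) = (i : ℕ) &&& (j : ℕ) := hand.symm
      _ ≤ (j : ℕ) := Nat.and_le_right
    exact this
  -- the determinant polynomial
  set P : MvPolynomial (Fin n × Fin k) ℝ :=
    Matrix.det (Matrix.of fun j i : Fin k =>
      ∏ l ∈ ι i, MvPolynomial.X (l, j)) with hP
  have hevalP : ∀ x : Fin n × Fin k → ℝ,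
      MvPolynomial.eval x P =
        Matrix.det (Matrix.of fun j i : Fin k => ∏ l ∈ ι i, x (l, j)) := by
    intro x
    rw [hP, RingHom.map_det]
    congr 1
    ext j i
    simp [Matrix.map_apply]
  -- nonzero: evaluate at the bit-matrix witness
  have hPne : P ≠ 0 := by
    intro h0
    have hev := hevalP (fun q : Fin n × Fin k =>
      if Nat.testBit ((q.2 : ℕ)) ((q.1 : ℕ)) then (1 : ℝ) else 0)
    rw [h0, map_zero] at hev
    have hMval : (Matrix.of fun j i : Fin k =>
        ∏ l ∈ ι i, (fun q : Fin n × Fin k =>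
          if Nat.testBit ((q.2 : ℕ)) ((q.1 : ℕ)) then (1 : ℝ) else 0) (l, j))
        = Matrix.of fun j i : Fin k => if ι i ⊆ ι j then (1 : ℝ) else 0 := by
      ext j i
      simp only [Matrix.of_apply]
      rw [Finset.prod_boole]
      congr 1
      simp only [eq_iff_iff]
      constructor
      · intro h l hl
        exact (hmem j l).mpr (h l hl)
      · intro h l hl
        exact (hmem j l).mp (h hl)
    rw [hMval] at hev
    have htri : (Matrix.of fun j i : Fin k =>
        if ι i ⊆ ι j then (1 : ℝ) else 0).BlockTriangular OrderDual.toDual := by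
      intro i j hij
      have hij' : i < j := hij
      simp only [Matrix.of_apply]
      rw [if_neg]
      intro hss
      exact absurd (hsub_le j i hss) (not_le.mpr hij')
    have hdet : (Matrix.of fun j i : Fin k =>
        if ι i ⊆ ι j then (1 : ℝ) else 0).det = 1 := by
      rw [Matrix.det_of_lowerTriangular _ htri]
      refine Finset.prod_eq_one fun i _ => ?_
      simp
    rw [hdet] at hev
    exact one_ne_zero hev.symm
  -- the bad set is contained in the zero set of the polynomial
  have hsub : {m : Fin n → Fin k → ℝ |
      ¬ LinearIndependent ℝ
        (fun j : Fin k => fun S : Finset (Fin n) => ∏ i ∈ S, m i j)} ⊆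
      {m : Fin n → Fin k → ℝ |
        MvPolynomial.eval (fun q : Fin n × Fin k => m q.1 q.2) P = 0} := by
    intro m hm
    simp only [Set.mem_setOf_eq] at hm ⊢
    by_contra hne
    apply hm
    rw [hevalP] at hne
    have hne' : (Matrix.of fun j i : Fin k => ∏ l ∈ ι i, m l j).det ≠ 0 := hne
    have hu : IsUnit (Matrix.of fun j i : Fin k => ∏ l ∈ ι i, m l j) :=
      (Matrix.isUnit_iff_isUnit_det _).mpr (isUnit_iff_ne_zero.mpr hne')
    have hli : LinearIndependent ℝ
        (fun j : Fin k => (Matrix.of fun j' i : Fin k => ∏ l ∈ ι i, m l j') j) :=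
      Matrix.linearIndependent_rows_iff_isUnit.mpr hu
    exact LinearIndependent.of_comp (LinearMap.funLeft ℝ ℝ ι) hli
  refine measure_mono_null hsub ?_
  have hSm : MeasurableSet {x : Fin n × Fin k → ℝ | MvPolynomial.eval x P = 0} := by
    have : {x : Fin n × Fin k → ℝ | MvPolynomial.eval x P = 0}
        = (fun x : Fin n × Fin k → ℝ => MvPolynomial.eval x P) ⁻¹' {0} := rfl
    rw [this]
    exact (isClosed_singleton.preimage (MvPolynomial.continuous_eval P)).measurableSet
  have hpre := (curry_measurePreserving n k).measure_preimage hSm.nullMeasurableSet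
  have hset : {m : Fin n → Fin k → ℝ |
      MvPolynomial.eval (fun q : Fin n × Fin k => m q.1 q.2) P = 0} =
      (fun (m : Fin n → Fin k → ℝ) (q : Fin n × Fin k) => m q.1 q.2) ⁻¹'
        {x : Fin n × Fin k → ℝ | MvPolynomial.eval x P = 0} := rfl
  rw [hset, hpre]
  exact mvpoly_zero_set_null _ P hPne
end

section
/- Let m be an n×k real matrix with k ≥ 3. If there is a set C of three columns such that at most one row of m is nonconstant on the columns in C, then the row space of H(m|^C) (the restriction of H(m) to the columns in C) has dimension at most 2, and consequently H(m) does not have full column rank. -/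
open Matrix
open scoped Classical

/-- Key lemma: if on the columns of `C` (of size 3) every entry of `hext m` decomposes as
`w₁ S + x j * w₂ S`, and `x` is nonconstant on `C`, then both conclusions hold. -/
theorem hext_key {n k : ℕ} (m : Matrix (Fin n) (Fin k) ℝ) (C : Finset (Fin k))
    (hC : C.card = 3) (w₁ w₂ : Finset (Fin n) → ℝ) (x : Fin k → ℝ)
    (hdecomp : ∀ j ∈ C, ∀ S, hext m S j = w₁ S + x j * w₂ S)
    (hx : ∃ p ∈ C, ∃ q ∈ C, x p ≠ x q) :
    Module.finrank ℝ
        ↥(Submodule.span ℝ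
          (Set.range fun S : Finset (Fin n) => fun j : {j // j ∈ C} => hext m S j.1)) ≤ 2 ∧
      ¬ LinearIndependent ℝ (hext m)ᵀ := by
  constructor
  · -- row space has dimension at most 2
    set u1 : {j // j ∈ C} → ℝ := fun _ => (1 : ℝ) with hu1
    set u2 : {j // j ∈ C} → ℝ := fun j => x j.1 with hu2
    have hle : Submodule.span ℝ
        (Set.range fun S : Finset (Fin n) => fun j : {j // j ∈ C} => hext m S j.1) ≤
        Submodule.span ℝ ({u1, u2} : Set ({j // j ∈ C} → ℝ)) := by
      rw [Submodule.span_le]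
      rintro _ ⟨S, rfl⟩
      have heq : (fun j : {j // j ∈ C} => hext m S j.1) = w₁ S • u1 + w₂ S • u2 := by
        funext j
        simp only [Pi.add_apply, Pi.smul_apply, hu1, hu2, smul_eq_mul]
        rw [hdecomp j.1 j.2 S]; ring
      show (fun j : {j // j ∈ C} => hext m S j.1) ∈
        (Submodule.span ℝ ({u1, u2} : Set ({j // j ∈ C} → ℝ)) : Set _)
      rw [heq]
      exact Submodule.add_mem _
        (Submodule.smul_mem _ _ (Submodule.subset_span (by simp)))
        (Submodule.smul_mem _ _ (Submodule.subset_span (by simp)))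
    refine le_trans (Submodule.finrank_mono hle) ?_
    have h2 := finrank_span_le_card (R := ℝ) ({u1, u2} : Set ({j // j ∈ C} → ℝ))
    refine h2.trans ?_
    have hsub : ({u1, u2} : Set ({j // j ∈ C} → ℝ)).toFinset ⊆ {u1, u2} := by
      intro z hz; simpa using (Set.mem_toFinset.mp hz)
    refine (Finset.card_le_card hsub).trans ?_
    exact (Finset.card_insert_le _ _).trans (by simp)
  · -- columns are linearly dependent
    obtain ⟨j1, j2, j3, h12, h13, h23, hCeq⟩ := Finset.card_eq_three.mp hC
    have hj1 : j1 ∈ C := by rw [hCeq]; simp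
    have hj2 : j2 ∈ C := by rw [hCeq]; simp
    have hj3 : j3 ∈ C := by rw [hCeq]; simp
    set a : ℝ := x j2 - x j3 with ha
    set b : ℝ := x j3 - x j1 with hb
    set c : ℝ := x j1 - x j2 with hc
    set g : Fin k → ℝ := fun j => if j = j1 then a else if j = j2 then b
      else if j = j3 then c else 0 with hg
    apply Fintype.not_linearIndependent_iff.mpr
    refine ⟨g, ?_, ?_⟩
    · -- the linear combination vanishes
      funext S
      have hzero : ∀ j ∈ Finset.univ, j ∉ ({j1, j2, j3} : Finset (Fin k)) →
          g j • (hext m)ᵀ j S = 0 := by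
        intro j _ hj
        simp only [Finset.mem_insert, Finset.mem_singleton, not_or] at hj
        simp [hg, hj.1, hj.2.1, hj.2.2]
      have hsum : (∑ j : Fin k, g j • (hext m)ᵀ j) S =
          ∑ j ∈ ({j1, j2, j3} : Finset (Fin k)), g j • (hext m)ᵀ j S := by
        rw [Finset.sum_apply]
        exact (Finset.sum_subset (Finset.subset_univ _) hzero).symm
      rw [hsum]
      rw [Finset.sum_insert (by simp [h12, h13]), Finset.sum_insert (by simp [h23]),
        Finset.sum_singleton]
      have hg1 : g j1 = a := by simp [hg]
      have hg2 : g j2 = b := by simp [hg, h12.symm]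
      have hg3 : g j3 = c := by simp [hg, h13.symm, h23.symm]
      simp only [transpose_apply, smul_eq_mul, hg1, hg2, hg3,
        hdecomp j1 hj1 S, hdecomp j2 hj2 S, hdecomp j3 hj3 S, Pi.zero_apply]
      rw [ha, hb, hc]; ring
    · -- some coefficient is nonzero
      by_contra hall
      push_neg at hall
      have hg1 : a = 0 := by have := hall j1; simpa [hg] using this
      have hg2 : b = 0 := by have := hall j2; simpa [hg, h12.symm] using this
      have hg3 : c = 0 := by have := hall j3; simpa [hg, h13.symm, h23.symm] using this
      have e12 : x j1 = x j2 := by rw [hc] at hg3; linarith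
      have e13 : x j1 = x j3 := by rw [hb] at hg2; linarith
      obtain ⟨p, hp, q, hq, hpq⟩ := hx
      rw [hCeq] at hp hq
      simp only [Finset.mem_insert, Finset.mem_singleton] at hp hq
      apply hpq
      rcases hp with rfl | rfl | rfl <;> rcases hq with rfl | rfl | rfl <;>
        simp_all <;> linarith

/-- Let `m` be an `n × k` matrix with `k ≥ 3`. If there is a set `C` of three columns such
that at most one row of `m` is nonconstant on the columns in `C`, then the row space of
`H(m)|^C` (the restriction of `H(m)` to the columns in `C`) has dimension at most `2`, and
consequently `H(m)` does not have full column rank. -/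
theorem hext_three_columns_one_nonconstant_row {n k : ℕ} (hk : 3 ≤ k)
    (m : Matrix (Fin n) (Fin k) ℝ) (C : Finset (Fin k)) (hC : C.card = 3)
    (h1 : (naeRows m C).card ≤ 1) :
    Module.finrank ℝ
        ↥(Submodule.span ℝ
          (Set.range fun S : Finset (Fin n) => fun j : {j // j ∈ C} => hext m S j.1)) ≤ 2 ∧
      ¬ LinearIndependent ℝ (hext m)ᵀ := by
  have hCne : C.Nonempty := Finset.card_pos.mp (by omega)
  obtain ⟨j₀, hj₀⟩ := hCne
  rcases Finset.eq_empty_or_nonempty (naeRows m C) with hemp | ⟨i₀, hi₀⟩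
  · -- all rows constant on C
    have hconst : ∀ i : Fin n, ∀ j ∈ C, ∀ j' ∈ C, m i j = m i j' := by
      intro i j hj j' hj'
      by_contra hne
      have : i ∈ naeRows m C := by
        simp only [naeRows, Finset.mem_filter, Finset.mem_univ, true_and]
        exact ⟨j, hj, j', hj', hne⟩
      rw [hemp] at this
      exact absurd this (Finset.notMem_empty i)
    apply hext_key m C hC (fun S => hext m S j₀) 0 (fun j => (j : ℕ))
    · intro j hj S
      simp only [Pi.zero_apply, mul_zero, add_zero, hext]
      exact Finset.prod_congr rfl fun i _ => hconst i j hj j₀ hj₀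
    · obtain ⟨j1, j2, j3, h12, h13, h23, hCeq⟩ := Finset.card_eq_three.mp hC
      refine ⟨j1, by rw [hCeq]; simp, j2, by rw [hCeq]; simp, ?_⟩
      exact_mod_cast fun h => h12 (Fin.ext (Nat.cast_injective h))
  · -- exactly one nonconstant row i₀
    have hconst : ∀ i : Fin n, i ≠ i₀ → ∀ j ∈ C, ∀ j' ∈ C, m i j = m i j' := by
      intro i hi j hj j' hj'
      by_contra hne
      have hmem : i ∈ naeRows m C := by
        simp only [naeRows, Finset.mem_filter, Finset.mem_univ, true_and]
        exact ⟨j, hj, j', hj', hne⟩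
      exact hi (Finset.card_le_one.mp h1 i hmem i₀ hi₀)
    set cc : Finset (Fin n) → ℝ := fun S => ∏ i ∈ S.erase i₀, m i j₀ with hcc
    apply hext_key m C hC
      (fun S => if i₀ ∈ S then 0 else cc S)
      (fun S => if i₀ ∈ S then cc S else 0)
      (fun j => m i₀ j)
    · intro j hj S
      by_cases hS : i₀ ∈ S
      · simp only [hS, if_pos, hext, zero_add]
        rw [← Finset.mul_prod_erase S (fun i => m i j) hS, hcc]
        congr 1
        exact Finset.prod_congr rfl fun i hi =>
          hconst i (Finset.ne_of_mem_erase hi) j hj j₀ hj₀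
      · simp only [hS, if_neg, not_false_iff, mul_zero, add_zero, hext, hcc,
          Finset.erase_eq_of_notMem hS]
        exact Finset.prod_congr rfl fun i hi =>
          hconst i (fun h => hS (h ▸ hi)) j hj j₀ hj₀
    · have := hi₀
      simp only [naeRows, Finset.mem_filter, Finset.mem_univ, true_and] at this
      exact this
end

section
/- There exists a matrix m with k = 4 columns such that the Hadamard extension H(m) has full column rank but m does not satisfy the NAE condition (i.e., ε̄(m) < −1). For example, the 2×4 matrix with rows (1, −1, 1, −1) and (1, 1, −1, −1) has H(m) of full column rank while ε̄(m) = −2. Hence for k > 3 the NAE condition is not necessary for H(m) to have full column rank. -/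
open Matrix
open scoped Classical

/-- The example matrix. -/
noncomputable def exM : Matrix (Fin 2) (Fin 4) ℝ := Matrix.of ![![1, -1, 1, -1], ![1, 1, -1, -1]]

lemma exM_linearIndependent : LinearIndependent ℝ (hext exM)ᵀ := by
  refine Fintype.linearIndependent_iff.mpr ?_
  intro g hg
  have h : ∀ S : Finset (Fin 2), ∑ j : Fin 4, g j * hext exM S j = 0 := by
    intro S
    have := congrFun hg S
    simpa [Finset.sum_apply, Matrix.transpose_apply] using this
  have h0 := h ∅
  have h1 := h {0}
  have h2 := h {1}
  have h3 := h {0,1}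
  simp [hext, Fin.sum_univ_four, Finset.prod_pair (show (0:Fin 2) ≠ 1 by decide), exM]
    at h0 h1 h2 h3
  intro j
  fin_cases j <;>
    first
      | (show g 0 = 0; linarith)
      | (show g 1 = 0; linarith)
      | (show g 2 = 0; linarith)
      | (show g 3 = 0; linarith)

lemma naeRows_exM_of_card (C : Finset (Fin 4)) (hC : 3 ≤ C.card) :
    naeRows exM C = Finset.univ := by
  ext i
  simp only [naeRows, Finset.mem_filter, Finset.mem_univ, true_and, iff_true]
  fin_cases i
  · -- row 0: values 1, -1, 1, -1
    have h1 : ∃ j ∈ C, j = 0 ∨ j = 2 := by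
      by_contra hcon
      push_neg at hcon
      have hsub : C ⊆ ({1, 3} : Finset (Fin 4)) := by
        intro j hj
        have := hcon j hj
        fin_cases j <;> simp_all
      have := Finset.card_le_card hsub
      simp at this
      omega
    have h2 : ∃ j ∈ C, j = 1 ∨ j = 3 := by
      by_contra hcon
      push_neg at hcon
      have hsub : C ⊆ ({0, 2} : Finset (Fin 4)) := by
        intro j hj
        have := hcon j hj
        fin_cases j <;> simp_all
      have := Finset.card_le_card hsub
      simp at this
      omega
    obtain ⟨j, hj, hj2⟩ := h1
    obtain ⟨j', hj', hj'2⟩ := h2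
    refine ⟨j, hj, j', hj', ?_⟩
    rcases hj2 with rfl | rfl <;> rcases hj'2 with rfl | rfl <;> norm_num [exM, Matrix.cons_val_two, Matrix.cons_val_three, Matrix.vecHead, Matrix.vecTail]
  · -- row 1: values 1, 1, -1, -1
    have h1 : ∃ j ∈ C, j = 0 ∨ j = 1 := by
      by_contra hcon
      push_neg at hcon
      have hsub : C ⊆ ({2, 3} : Finset (Fin 4)) := by
        intro j hj
        have := hcon j hj
        fin_cases j <;> simp_all
      have := Finset.card_le_card hsub
      simp at this
      omega
    have h2 : ∃ j ∈ C, j = 2 ∨ j = 3 := by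
      by_contra hcon
      push_neg at hcon
      have hsub : C ⊆ ({0, 1} : Finset (Fin 4)) := by
        intro j hj
        have := hcon j hj
        fin_cases j <;> simp_all
      have := Finset.card_le_card hsub
      simp at this
      omega
    obtain ⟨j, hj, hj2⟩ := h1
    obtain ⟨j', hj', hj'2⟩ := h2
    refine ⟨j, hj, j', hj', ?_⟩
    rcases hj2 with rfl | rfl <;> rcases hj'2 with rfl | rfl <;> norm_num [exM, Matrix.cons_val_two, Matrix.cons_val_three, Matrix.vecHead, Matrix.vecTail]

lemma exM_eps_lower (C : Finset (Fin 4)) : -2 ≤ eps exM C := by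
  unfold eps
  by_cases h : 3 ≤ C.card
  · rw [naeRows_exM_of_card C h]
    have hle : C.card ≤ 4 := by
      simpa using Finset.card_le_card (Finset.subset_univ C)
    simp
    omega
  · have : (0:ℤ) ≤ (naeRows exM C).card := by positivity
    omega

lemma exM_eps_univ : eps exM Finset.univ = -2 := by
  unfold eps
  rw [naeRows_exM_of_card _ (by decide)]
  decide

/-- There exists a matrix `m` with `k = 4` columns such that `H(m)` has full column rank
but `m` does not satisfy the NAE condition; indeed the `2 × 4` matrix with rows
`(1, -1, 1, -1)` and `(1, 1, -1, -1)` has `H(m)` of full column rank while `ε̄(m) = -2`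
(so `ε̄(m) < -1`). Hence for `k > 3` the NAE condition is not necessary for `H(m)` to
have full column rank. -/
theorem nae_not_necessary_for_fullColRank :
    ∃ m : Matrix (Fin 2) (Fin 4) ℝ,
      m = Matrix.of ![![1, -1, 1, -1], ![1, 1, -1, -1]] ∧
      LinearIndependent ℝ (hext m)ᵀ ∧
      (∀ C : Finset (Fin 4), C.Nonempty → -2 ≤ eps m C) ∧
      (∃ C : Finset (Fin 4), C.Nonempty ∧ eps m C = -2) ∧
      ¬ (∀ C : Finset (Fin 4), C.Nonempty → -1 ≤ eps m C) := by
  refine ⟨exM, rfl, exM_linearIndependent, fun C _ => exM_eps_lower C,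
    ⟨Finset.univ, Finset.univ_nonempty, exM_eps_univ⟩, fun h => ?_⟩
  have := h Finset.univ Finset.univ_nonempty
  rw [exM_eps_univ] at this
  omega
end

section
/- Let m be an n×k real matrix and π ∈ ℝ^k a probability vector (all entries nonnegative, summing to 1) with every entry strictly positive. Define the moment map μ(m,π) ∈ ℝ^{2^{[n]}} by μ(m,π)_S = Σ_{j=1}^k π_j ∏_{i∈S} m_i^j for each S ⊆ {1,…,n}. If the Hadamard extension H(m) does not have full column rank, then there exists a probability vector π′ ≠ π with μ(m,π′) = μ(m,π); in particular μ is not injective. -/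
open Matrix

/-- The moment map: `μ(m, π)_S = Σ_j π_j ∏_{i ∈ S} m i j` for each `S ⊆ {1,…,n}`. -/
noncomputable def momentMap {n k : ℕ} (m : Matrix (Fin n) (Fin k) ℝ) (π : Fin k → ℝ) :
    Finset (Fin n) → ℝ :=
  fun S => ∑ j, π j * ∏ i ∈ S, m i j

/-- Let `π` be a probability vector with all entries strictly positive. If the Hadamard
extension `H(m)` does not have full column rank, then there is a probability vector
`π' ≠ π` with `μ(m, π') = μ(m, π)`; in particular the moment map is not injective. -/
theorem momentMap_not_injective_of_not_fullColRank {n k : ℕ}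
    (m : Matrix (Fin n) (Fin k) ℝ) (π : Fin k → ℝ)
    (hnonneg : ∀ j, 0 ≤ π j) (hsum : ∑ j, π j = 1) (hpos : ∀ j, 0 < π j)
    (h : ¬ LinearIndependent ℝ (hext m)ᵀ) :
    ∃ π' : Fin k → ℝ, (∀ j, 0 ≤ π' j) ∧ (∑ j, π' j = 1) ∧ π' ≠ π ∧
      momentMap m π' = momentMap m π := by
  replace h := Fintype.not_linearIndependent_iff.mp h
  obtain ⟨g, hg0, j0, hj0⟩ := h
  have hnk : Nonempty (Fin k) := ⟨j0⟩
  -- pointwise relation: for each S, ∑ j, g j * ∏ i∈S, m i j = 0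
  have key : ∀ S : Finset (Fin n), ∑ j, g j * ∏ i ∈ S, m i j = 0 := by
    intro S
    have := congrFun hg0 S
    simpa [hext, transpose, Finset.sum_apply] using this
  have hgsum : ∑ j, g j = 0 := by
    have := key ∅
    simpa using this
  set ε : ℝ := Finset.univ.inf' Finset.univ_nonempty (fun j => π j / (|g j| + 1)) with hε
  have hεpos : 0 < ε := by
    rw [hε, Finset.lt_inf'_iff]
    intro j _
    exact div_pos (hpos j) (by positivity)
  have hεle : ∀ j, ε ≤ π j / (|g j| + 1) := fun j =>
    Finset.inf'_le _ (Finset.mem_univ j)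
  refine ⟨fun j => π j + ε * g j, ?_, ?_, ?_, ?_⟩
  · intro j
    have h2 : ε * (|g j| + 1) ≤ π j := by
      have hc : (0:ℝ) < |g j| + 1 := by positivity
      have := (le_div_iff₀ hc).mp (hεle j)
      linarith
    have h3 : ε * |g j| ≤ ε * (|g j| + 1) := by nlinarith
    have h4 := neg_abs_le (g j)
    simp only []
    nlinarith
  · rw [Finset.sum_add_distrib, hsum, ← Finset.mul_sum, hgsum]
    ring
  · intro heq
    have := congrFun heq j0
    have : ε * g j0 = 0 := by linarith [this]
    rcases mul_eq_zero.mp this with h | h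
    · exact absurd h (ne_of_gt hεpos)
    · exact hj0 h
  · funext S
    simp only [momentMap]
    have : ∑ j, (π j + ε * g j) * ∏ i ∈ S, m i j
        = (∑ j, π j * ∏ i ∈ S, m i j) + ε * ∑ j, g j * ∏ i ∈ S, m i j := by
      rw [Finset.mul_sum, ← Finset.sum_add_distrib]
      congr 1; funext j; ring
    rw [this, key S]
    ring
end
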